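/- Let {r_i}_{i=1}^∞ be a sequence of vectors in ℝ^k with all coordinates nonnegative, and suppose the infinite sum r_∞ := Σ_{i=1}^∞ r_i converges (every coordinate is finite). Then there exist N > 0 and nonnegative real coefficients t_1,…,t_N such that r_∞ = Σ_{i=1}^N t_i r_i. -/

import Mathlib

open Filter Topology
open scoped RealInnerProductSpace

/-- A cone generated by finitely many vectors with nonnegative coordinates is closed. -/
lemma isClosed_finCone {k : ℕ} (N : ℕ) (v : Fin N → Fin k → ℝ) (hv : ∀ i j, 0 ≤ v i j) :
    IsClosed {x : Fin k → ℝ | ∃ t : Fin N → ℝ, (∀ i, 0 ≤ t i) ∧ x = ∑ i, t i • v i} := by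
  classical
  rw [← isSeqClosed_iff_isClosed]
  intro x z hmem hz
  choose t ht hx using hmem
  set t' : ℕ → Fin N → ℝ := fun n i => if v i = 0 then 0 else t n i with ht'def
  have ht'nn : ∀ n i, 0 ≤ t' n i := by
    intro n i; by_cases h : v i = 0 <;> simp [ht'def, h, ht n i]
  have hx' : ∀ n, x n = ∑ i, t' n i • v i := by
    intro n; rw [hx n]; refine Finset.sum_congr rfl fun i _ => ?_
    by_cases h : v i = 0 <;> simp [ht'def, h]
  have hcoord : ∀ j : Fin k, ∃ M, ∀ n, x n j ≤ M := by
    intro j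
    have h1 : Tendsto (fun n => x n j) atTop (𝓝 (z j)) :=
      ((continuous_apply j).tendsto z).comp hz
    obtain ⟨M, hM⟩ := h1.bddAbove_range
    exact ⟨M, fun n => hM (Set.mem_range_self n)⟩
  choose M hM using hcoord
  have key : ∀ i : Fin N, v i ≠ 0 → ∃ B, ∀ n, t' n i ≤ B := by
    intro i hvi
    obtain ⟨j, hj⟩ : ∃ j, 0 < v i j := by
      by_contra h; push_neg at h
      exact hvi (funext fun j => le_antisymm (h j) (hv i j))
    refine ⟨M j / v i j, fun n => ?_⟩
    rw [le_div_iff₀ hj]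
    have h1 : t' n i * v i j ≤ ∑ i', t' n i' * v i' j := by
      refine Finset.single_le_sum (f := fun i' => t' n i' * v i' j)
        (fun i' _ => mul_nonneg (ht'nn n i') (hv i' j)) (Finset.mem_univ i)
    have h2 : (∑ i', t' n i' * v i' j) = x n j := by
      rw [hx' n, Finset.sum_apply]; simp
    linarith [hM j n]
  choose B0 hB0 using key
  set B : Fin N → ℝ := fun i => if h : v i = 0 then 0 else B0 i h with hBdef
  have hmem' : ∀ n, t' n ∈ Set.Icc (0 : Fin N → ℝ) B := by
    intro n
    constructor
    · intro i; exact ht'nn n i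
    · intro i
      by_cases h : v i = 0
      · simp [ht'def, hBdef, h]
      · simpa [hBdef, h] using hB0 i h n
  obtain ⟨τ, hτ, φ, hφ, hlim⟩ := isCompact_Icc.tendsto_subseq hmem'
  refine ⟨τ, fun i => hτ.1 i, ?_⟩
  have hF : Continuous (fun t : Fin N → ℝ => ∑ i, t i • v i) :=
    continuous_finset_sum _ fun i _ => (continuous_apply i).smul continuous_const
  have h1 : Tendsto (fun n => x (φ n)) atTop (𝓝 (∑ i, τ i • v i)) := by
    have h2 := (hF.tendsto τ).comp hlim
    simpa [Function.comp_def, ← hx'] using h2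
  exact tendsto_nhds_unique (hz.comp hφ.tendsto_atTop) h1

/-- if a sequence of nonnegative vectors in `ℝ^k` has a (coordinatewise)
convergent infinite sum `r_∞`, then `r_∞` is a nonnegative combination of finitely
many of the vectors. -/
theorem sum_in_finite_cone (k : ℕ) (r : ℕ → Fin k → ℝ)
    (hnn : ∀ i j, 0 ≤ r i j)
    (hsum : ∀ j, Summable fun i => r i j) :
    ∃ N : ℕ, 0 < N ∧ ∃ t : Fin N → ℝ, (∀ i, 0 ≤ t i) ∧
      ∀ j, (∑' i, r i j) = ∑ i : Fin N, t i * r i j := by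
  classical
  have hsummable : Summable r := Pi.summable.mpr hsum
  set E := EuclideanSpace ℝ (Fin k) with hE
  let e : E ≃L[ℝ] (Fin k → ℝ) := EuclideanSpace.equiv (Fin k) ℝ
  set rE : ℕ → E := fun i => e.symm (r i) with hrE
  have hsumE : Summable rE := (e.symm : (Fin k → ℝ) →L[ℝ] E).summable hsummable
  set s : E := ∑' i, rE i with hs
  have hes : e s = ∑' i, r i := by
    rw [hs, ← ContinuousLinearEquiv.map_tsum]
    exact tsum_congr fun i => e.apply_symm_apply (r i)
  have hsj : ∀ j, e s j = ∑' i, r i j := by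
    intro j; rw [hes, tsum_apply hsummable]
  have emap : ∀ (n : ℕ) (t : Fin n → ℝ), e (∑ i, t i • rE i) = ∑ i, t i • r i := by
    intro n t
    rw [map_sum]
    exact Finset.sum_congr rfl fun i _ => by
      rw [map_smul, e.apply_symm_apply]
  set C : ℕ → Set E := fun N => {x | ∃ t : Fin N → ℝ, (∀ i, 0 ≤ t i) ∧ x = ∑ i, t i • rE i}
    with hC
  suffices hS : ∃ N, s ∈ C (N + 1) by
    obtain ⟨N, t, htn, hts⟩ := hS
    refine ⟨N + 1, Nat.succ_pos _, t, htn, fun j => ?_⟩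
    rw [← hsj j, hts, emap, Finset.sum_apply]
    simp
  by_contra hcon
  push_neg at hcon
  -- separation for each N
  have hCconv : ∀ N : ℕ, ∃ y : E,
      (∀ i : ℕ, i ≤ N → 0 ≤ ⟪rE i, y⟫) ∧ ⟪y, s⟫ < 0 := by
    intro N
    let K : ConvexCone ℝ E :=
      { carrier := C (N + 1)
        smul_mem' := by
          rintro c hc x ⟨t, htn, rfl⟩
          exact ⟨c • t, fun i => mul_nonneg hc.le (htn i), by
            rw [Finset.smul_sum]; exact Finset.sum_congr rfl fun i _ => smul_smul c (t i) _⟩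
        add_mem' := by
          rintro x ⟨t, htn, rfl⟩ yy ⟨u, hun, rfl⟩
          exact ⟨t + u, fun i => add_nonneg (htn i) (hun i), by
            rw [← Finset.sum_add_distrib]
            exact Finset.sum_congr rfl fun i _ => (add_smul (t i) (u i) _).symm⟩ }
    have hne : (K : Set E).Nonempty := ⟨0, 0, fun i => le_refl 0, by simp⟩
    have hcl : IsClosed (K : Set E) := by
      have hset : (K : Set E) = e ⁻¹'
          {x : Fin k → ℝ | ∃ t : Fin (N + 1) → ℝ, (∀ i, 0 ≤ t i) ∧ x = ∑ i, t i • r i} := by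
        ext x
        constructor
        · rintro ⟨t, htn, rfl⟩
          exact ⟨t, htn, emap _ t⟩
        · rintro ⟨t, htn, hxe⟩
          refine ⟨t, htn, ?_⟩
          apply e.injective
          rw [hxe, emap]
      rw [show (K : Set E) = C (N+1) from rfl] at *
      rw [hset]
      exact (isClosed_finCone (N + 1) (fun i => r i) (fun i j => hnn i j)).preimage
        e.continuous
    have h0 : (0 : E) ∈ C (N + 1) := ⟨0, fun i => le_refl 0, by simp⟩
    let P : ProperCone ℝ E :=
      { carrier := C (N + 1)
        add_mem' := fun {a b} ha hb => K.add_mem' ha hb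
        zero_mem' := h0
        smul_mem' := fun c x hx => by
          rcases eq_or_lt_of_le c.2 with hc | hc
          · have : c = 0 := NNReal.eq hc.symm
            subst this; simpa using h0
          · exact K.smul_mem' hc hx
        isClosed' := hcl }
    obtain ⟨y, hy1, hy2⟩ :=
      ProperCone.hyperplane_separation' P (hcon N)
    rw [real_inner_comm] at hy2
    refine ⟨y, fun i hi => ?_, hy2⟩
    refine hy1 (rE i) ?_
    refine ⟨fun i' => if i' = ⟨i, Nat.lt_succ_of_le hi⟩ then 1 else 0, ?_, ?_⟩
    · intro i'; dsimp only; split <;> norm_num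
    · simp [ite_smul, Finset.sum_ite_eq' Finset.univ (⟨i, Nat.lt_succ_of_le hi⟩ : Fin (N+1))]
  choose y hy1 hy2 using hCconv
  set V : Submodule ℝ E := Submodule.span ℝ (Set.range rE) with hV
  have hrEV : ∀ i, rE i ∈ V := fun i => Submodule.subset_span ⟨i, rfl⟩
  have hVclosed : IsClosed (V : Set E) := V.closed_of_finiteDimensional
  have hsV : s ∈ V := by
    have hpart : Tendsto (fun n => ∑ i ∈ Finset.range n, rE i) atTop (𝓝 s) :=
      hsumE.hasSum.tendsto_sum_nat
    exact hVclosed.mem_of_tendsto hpart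
      (Eventually.of_forall fun n => sum_mem fun i _ => hrEV i)
  set p : ℕ → E := fun N => (V.orthogonalProjectionOnto (y N) : E) with hp
  have hproj : ∀ (N : ℕ) (x : E), x ∈ V → ⟪x, p N⟫ = ⟪x, y N⟫ := by
    intro N x hx
    have h := Submodule.sub_starProjection_mem_orthogonal (K := V) (y N)
    have h2 := (Submodule.mem_orthogonal V _).mp h x hx
    rw [inner_sub_right, Submodule.starProjection_apply] at h2
    linarith
  have hp1 : ∀ (N i : ℕ), i ≤ N → 0 ≤ ⟪rE i, p N⟫ := fun N i hi => by
    rw [hproj N _ (hrEV i)]; exact hy1 N i hi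
  have hp2 : ∀ N, ⟪s, p N⟫ < 0 := fun N => by
    rw [hproj N s hsV, real_inner_comm]; exact hy2 N
  have hpne : ∀ N, p N ≠ 0 := by
    intro N h
    have := hp2 N
    rw [h, inner_zero_right] at this
    linarith
  set u : ℕ → E := fun N => ‖p N‖⁻¹ • p N with hu
  have hu1 : ∀ (N i : ℕ), i ≤ N → 0 ≤ ⟪rE i, u N⟫ := by
    intro N i hi
    rw [hu]
    rw [real_inner_smul_right]
    exact mul_nonneg (inv_nonneg.2 (norm_nonneg _)) (hp1 N i hi)
  have hu2 : ∀ N, ⟪s, u N⟫ ≤ 0 := by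
    intro N
    rw [hu, real_inner_smul_right]
    exact mul_nonpos_of_nonneg_of_nonpos (inv_nonneg.2 (norm_nonneg _)) (hp2 N).le
  have huV : ∀ N, u N ∈ V := fun N =>
    Submodule.smul_mem V _ (V.orthogonalProjectionOnto (y N)).2
  have hunorm : ∀ N, ‖u N‖ = 1 := by
    intro N
    rw [hu, norm_smul, norm_inv, norm_norm]
    exact inv_mul_cancel₀ (norm_ne_zero_iff.2 (hpne N))
  have hQ : IsCompact ((V : Set E) ∩ Metric.sphere 0 1) :=
    (isCompact_sphere (0 : E) 1).inter_left hVclosed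
  obtain ⟨w, hwQ, φ, hφ, hlim⟩ := hQ.tendsto_subseq
    (fun N => ⟨huV N, by simp [Metric.mem_sphere, hunorm N]⟩)
  have hw_inner : ∀ i, 0 ≤ ⟪rE i, w⟫ := by
    intro i
    have hcont : Tendsto (fun m => ⟪rE i, u (φ m)⟫) atTop (𝓝 ⟪rE i, w⟫) :=
      ((Continuous.inner continuous_const continuous_id).tendsto w).comp hlim
    refine ge_of_tendsto hcont ?_
    filter_upwards [eventually_ge_atTop i] with m hm
    exact hu1 (φ m) i (le_trans hm (hφ.le_apply))
  have hw_s : ⟪s, w⟫ ≤ 0 := by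
    have hcont : Tendsto (fun m => ⟪s, u (φ m)⟫) atTop (𝓝 ⟪s, w⟫) :=
      ((Continuous.inner continuous_const continuous_id).tendsto w).comp hlim
    exact le_of_tendsto hcont (Eventually.of_forall fun m => hu2 (φ m))
  -- inner products with w sum to ⟪w, s⟫
  have hsum_inner : Summable fun i => ⟪w, rE i⟫ := (innerSL ℝ w).summable hsumE
  have htsum : ∑' i, ⟪w, rE i⟫ = ⟪w, s⟫ :=
    ((innerSL ℝ w).map_tsum hsumE).symm
  have hzero : ∀ i, ⟪rE i, w⟫ = 0 := by
    intro i
    refine le_antisymm ?_ (hw_inner i)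
    rw [real_inner_comm]
    calc ⟪w, rE i⟫ ≤ ∑' i', ⟪w, rE i'⟫ :=
          hsum_inner.le_tsum i (fun j _ => by rw [real_inner_comm]; exact hw_inner j)
      _ = ⟪w, s⟫ := htsum
      _ ≤ 0 := by rw [real_inner_comm]; exact hw_s
  have hwperp : w ∈ Vᗮ := by
    rw [Submodule.mem_orthogonal]
    intro x hx
    induction hx using Submodule.span_induction with
    | mem x hxm => obtain ⟨i, rfl⟩ := hxm; exact hzero i
    | zero => exact inner_zero_left w
    | add a b _ _ ha hb => rw [inner_add_left, ha, hb, add_zero]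
    | smul c a _ ha => rw [inner_smul_left, ha, mul_zero]
  have hwzero : w = 0 := by
    have h := (Submodule.mem_orthogonal V w).mp hwperp w hwQ.1
    exact inner_self_eq_zero.mp h
  have : (1 : ℝ) = 0 := by
    have h1 : ‖w‖ = 1 := by simpa using hwQ.2
    rw [hwzero, norm_zero] at h1
    linarith
  linarith
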